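/- Let k be a field and A a commutative k-algebra that is an integral domain, graded by the product G₀ × G₁ of two additive abelian groups. Suppose that e₁, …, e_r generate the group G₀, that for each i there is a unit g_i of A that is homogeneous of degree (e_i, 0), and that the Veronese subalgebra A¹ = ⊕_{d∈G₁} A_{(0,d)} is a finitely generated k-algebra. Then A is a finitely generated k-algebra. -/

import Mathlib

open DirectSum

/-- In a graded domain, the inverse of a homogeneous unit is homogeneous of
opposite degree. -/
lemma aux_inv_homogeneous {k : Type*} [Field k] {A : Type*} [CommRing A] [IsDomain A]
    [Algebra k A] {ι : Type*} [AddCommGroup ι] [DecidableEq ι]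
    (𝒜 : ι → Submodule k A) [GradedAlgebra 𝒜] (u : Aˣ) {a : ι}
    (hu : (u : A) ∈ 𝒜 a) : ((u⁻¹ : Aˣ) : A) ∈ 𝒜 (-a) := by
  classical
  set v : A := ((u⁻¹ : Aˣ) : A) with hv
  have hzero : ∀ d : ι, d ≠ -a → (decompose 𝒜 v d : A) = 0 := by
    intro d hd
    have h1 : (decompose 𝒜 ((u : A) * v) (a + d) : A) = (u : A) * decompose 𝒜 v d :=
      DirectSum.coe_decompose_mul_add_of_left_mem 𝒜 hu
    have h2 : (u : A) * v = 1 := u.mul_inv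
    have hne : a + d ≠ 0 := by
      intro h
      apply hd
      linear_combination (norm := abel) h
    have h3 : (decompose 𝒜 ((u : A) * v) (a + d) : A) = 0 := by
      rw [h2, decompose_one]
      have := DirectSum.of_eq_of_ne (β := fun i => 𝒜 i) 0 (a + d)
        (1 : 𝒜 0) (fun h => hne h)
      rw [show ((1 : ⨁ i, 𝒜 i) : ⨁ i, 𝒜 i) = DirectSum.of (fun i => 𝒜 i) 0 (1 : 𝒜 0) from rfl,
        this]
      rfl
    have h4 : (u : A) * (decompose 𝒜 v d : A) = 0 := by rw [← h1, h3]
    rcases mul_eq_zero.mp h4 with h | h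
    · exact absurd h u.ne_zero
    · exact h
  have hsum := DirectSum.sum_support_decompose 𝒜 v
  rw [← hsum]
  apply Submodule.sum_mem
  intro d hd
  by_cases hda : d = -a
  · rw [hda]; exact (decompose 𝒜 v (-a)).2
  · rw [hzero d hda]; exact zero_mem _

/-- Let `A` be an integral domain, graded by a product `G₀ × G₁` of abelian groups,
with `e₁, …, e_r` generating `G₀` and homogeneous units `gᵢ` of degree `(eᵢ, 0)`.
If the Veronese subalgebra `A¹ = ⊕_{d ∈ G₁} A_{(0,d)}` is a finitely generated
`k`-algebra, then so is `A`. -/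
theorem finiteType_of_veronese_finiteType_and_homogeneous_units
    {k : Type*} [Field k] {A : Type*} [CommRing A] [IsDomain A] [Algebra k A]
    {G₀ G₁ : Type*} [AddCommGroup G₀] [AddCommGroup G₁]
    [DecidableEq G₀] [DecidableEq G₁]
    (𝒜 : G₀ × G₁ → Submodule k A) [GradedAlgebra 𝒜]
    {r : ℕ} (e : Fin r → G₀) (he : AddSubgroup.closure (Set.range e) = ⊤)
    (g : Fin r → Aˣ) (hg : ∀ i, (g i : A) ∈ 𝒜 (e i, 0))
    (hV : (Algebra.adjoin k (⋃ d : G₁, (𝒜 (0, d) : Set A))).FG) :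
    Algebra.FiniteType k A := by
  classical
  obtain ⟨S, hS⟩ := hV
  set gens : Set A := ↑S ∪ (Set.range fun i => ((g i : A))) ∪
      (Set.range fun i => (((g i)⁻¹ : Aˣ) : A)) with hgens
  set T : Subalgebra k A := Algebra.adjoin k gens with hT
  -- the Veronese subalgebra is contained in T
  have hVer : ∀ (d : G₁), (𝒜 (0, d) : Set A) ⊆ (T : Set A) := by
    intro d
    have h1 : (𝒜 (0, d) : Set A) ⊆ ⋃ d : G₁, (𝒜 (0, d) : Set A) :=
      Set.subset_iUnion (fun d : G₁ => (𝒜 (0, d) : Set A)) d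
    have h2 : Algebra.adjoin k (⋃ d : G₁, (𝒜 (0, d) : Set A)) ≤ T := by
      rw [← hS]
      exact Algebra.adjoin_mono (by intro x hx; exact Or.inl (Or.inl hx))
    intro x hx
    exact h2 (Algebra.subset_adjoin (h1 hx))
  -- key claim: for every d₀ there is a homogeneous unit of degree (d₀, 0) in T with
  -- inverse in T
  have key : ∀ d₀ : G₀, ∃ u : Aˣ, (u : A) ∈ 𝒜 (d₀, (0 : G₁)) ∧ (u : A) ∈ T ∧
      ((u⁻¹ : Aˣ) : A) ∈ T := by
    intro d₀
    have hd₀ : d₀ ∈ AddSubgroup.closure (Set.range e) := he ▸ AddSubgroup.mem_top d₀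
    induction hd₀ using AddSubgroup.closure_induction with
    | mem x hx =>
      obtain ⟨i, rfl⟩ := hx
      exact ⟨g i, hg i, Algebra.subset_adjoin (Or.inl (Or.inr ⟨i, rfl⟩)),
        Algebra.subset_adjoin (Or.inr ⟨i, rfl⟩)⟩
    | zero =>
      exact ⟨1, by exact SetLike.GradedOne.one_mem (A := fun p => 𝒜 p), one_mem T,
        by simpa using one_mem T⟩
    | add x y _ _ hx hy =>
      obtain ⟨u, hu1, hu2, hu3⟩ := hx
      obtain ⟨v, hv1, hv2, hv3⟩ := hy
      refine ⟨u * v, ?_, mul_mem hu2 hv2, by rw [mul_inv]; exact mul_mem hu3 hv3⟩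
      have := SetLike.GradedMul.mul_mem (A := fun p => 𝒜 p) hu1 hv1
      simpa using this
    | neg x _ hx =>
      obtain ⟨u, hu1, hu2, hu3⟩ := hx
      refine ⟨u⁻¹, ?_, hu3, by rw [inv_inv]; exact hu2⟩
      have := aux_inv_homogeneous 𝒜 u hu1
      simpa using this
  -- every homogeneous element is in T
  have hhom : ∀ (p : G₀ × G₁) (x : A), x ∈ 𝒜 p → x ∈ T := by
    rintro ⟨d₀, d₁⟩ x hx
    obtain ⟨u, hu1, hu2, hu3⟩ := key d₀
    have hmul : ((u⁻¹ : Aˣ) : A) * x ∈ 𝒜 ((0 : G₀), d₁) := by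
      have := SetLike.GradedMul.mul_mem (A := fun p => 𝒜 p)
        (aux_inv_homogeneous 𝒜 u hu1) hx
      simpa using this
    have : x = (u : A) * (((u⁻¹ : Aˣ) : A) * x) := by
      rw [← mul_assoc, u.mul_inv, one_mul]
    rw [this]
    exact mul_mem hu2 (hVer d₁ hmul)
  -- conclude
  have htop : T = ⊤ := by
    rw [eq_top_iff]
    intro x _
    have hsum := DirectSum.sum_support_decompose 𝒜 x
    rw [← hsum]
    exact Subalgebra.sum_mem T fun p _ => hhom p _ (DirectSum.decompose 𝒜 x p).2
  refine ⟨S ∪ (Finset.image (fun i => ((g i : A))) Finset.univ) ∪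
    (Finset.image (fun i => (((g i)⁻¹ : Aˣ) : A)) Finset.univ), ?_⟩
  rw [← htop, hT, hgens]
  congr 1
  simp only [Finset.coe_union, Finset.coe_image, Finset.coe_univ, Set.image_univ]
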